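/- Let V be a finite set, P a probability measure on Ω^V, ν a probability distribution on the subsets of V (a random subset 𝒰 independent of the configuration), and (Y_S)_{S⊆V} a family of random variables such that Y_S is measurable with respect to F_S (the σ-algebra generated by the coordinates in S) and Var(Y_S) = 1 for every S ⊆ V. Let M := Σ_{S⊆V} ν(S)·Y_S and ρ := Σ_{S,T⊆V} ν(S)·ν(T)·Cov(Y_S, Y_T), which equals the mean correlation E[Corr(Y_{𝒰₁}, Y_{𝒰₂})] of two independent samples 𝒰₁, 𝒰₂ from ν and also equals Var(M). For an integer k ≥ 1, let ν^{⊕k} denote the distribution of the union 𝒰₁ ∪ ⋯ ∪ 𝒰_k of k independent copies of 𝒰. Then Σ_{W⊆V} ν^{⊕k}(W)·clue(M|W) ≥ 1 − 1/(1 + k·ρ). -/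

import Mathlib

open MeasureTheory ProbabilityTheory Filter Finset

namespace SR

/-- The σ-algebra generated by the coordinates in `U`. -/
def coordSigma (V : Type*) (Ω : Type*) [MeasurableSpace Ω] (U : Finset V) :
    MeasurableSpace (V → Ω) :=
  MeasurableSpace.comap (fun (ω : V → Ω) (u : U) => ω u) inferInstance

/-- `clue(f|U) = Var(E[f|F_U])/Var(f)`, with the convention that it is `0` when `Var f = 0`. -/
noncomputable def clue {V : Type*} {Ω : Type*} [MeasurableSpace Ω]
    (μ : Measure (V → Ω)) (f : (V → Ω) → ℝ) (U : Finset V) : ℝ :=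
  if variance f μ = 0 then 0
  else variance (μ[f | coordSigma V Ω U]) μ / variance f μ

/-- `ν` is a probability distribution on the subsets of `V` (a random subset of `V`). -/
def IsDist {V : Type*} [Fintype V] (ν : Finset V → ℝ) : Prop :=
  (∀ S, 0 ≤ ν S) ∧ ∑ S : Finset V, ν S = 1

/-- Expected clue `E[clue(f|𝒰)]` for a random subset with distribution `ν`. -/
noncomputable def eClue {V : Type*} [Fintype V] {Ω : Type*} [MeasurableSpace Ω]
    (μ : Measure (V → Ω)) (f : (V → Ω) → ℝ) (ν : Finset V → ℝ) : ℝ :=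
  ∑ S : Finset V, ν S * clue μ f S

/-- The revealment `δ(𝒰) = max_v P[v ∈ 𝒰]` of a random subset with distribution `ν`. -/
noncomputable def revealment {V : Type*} [Fintype V] [DecidableEq V] (ν : Finset V → ℝ) : ℝ :=
  sSup (Set.range fun v : V => ∑ S ∈ Finset.univ.filter (fun S : Finset V => v ∈ S), ν S)

/-- Covariance of two real random variables. -/
noncomputable def cov {α : Type*} [MeasurableSpace α] (μ : Measure α) (f g : α → ℝ) : ℝ :=
  ∫ x, (f x - ∫ y, f y ∂μ) * (g x - ∫ y, g y ∂μ) ∂μ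

/-- Standard deviation. -/
noncomputable def sd {α : Type*} [MeasurableSpace α] (μ : Measure α) (f : α → ℝ) : ℝ :=
  Real.sqrt (variance f μ)

/-- Correlation. -/
noncomputable def corr {α : Type*} [MeasurableSpace α] (μ : Measure α) (f g : α → ℝ) : ℝ :=
  cov μ f g / (sd μ f * sd μ g)

/-- Distribution of the union of `k` independent copies of a random subset with law `ν`. -/
noncomputable def unionPow {V : Type*} [Fintype V] [DecidableEq V]
    (ν : Finset V → ℝ) (k : ℕ) : Finset V → ℝ :=
  fun W => ∑ t ∈ Finset.univ.filter (fun t : Fin k → Finset V => Finset.univ.sup t = W),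
    ∏ i, ν (t i)

end SR

open MeasureTheory ProbabilityTheory SR

section Aux

variable {α : Type*} {mα : MeasurableSpace α} {μ : Measure α}

lemma integrable_mul_of_memL2 {f g : α → ℝ}
    (hf : MemLp f 2 μ) (hg : MemLp g 2 μ) :
    Integrable (fun x => f x * g x) μ := by
  have h := MeasureTheory.L2.integrable_inner (𝕜 := ℝ) (hf.toLp f) (hg.toLp g)
  refine h.congr ?_
  filter_upwards [hf.coeFn_toLp, hg.coeFn_toLp] with x hx hy
  simp [hx, hy, RCLike.inner_apply, mul_comm]

lemma variance_eq_integral_center [IsProbabilityMeasure μ] {f : α → ℝ} (hf : MemLp f 2 μ) :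
    variance f μ = ∫ x, (f x - ∫ y, f y ∂μ) * (f x - ∫ y, f y ∂μ) ∂μ := by
  rw [variance_eq_integral hf.aestronglyMeasurable.aemeasurable]
  congr 1
  ext x
  simp [sq]


lemma cov_sq_le_var_mul_var [IsProbabilityMeasure μ] {f g : α → ℝ}
    (hf : MemLp f 2 μ) (hg : MemLp g 2 μ) :
    SR.cov μ f g ^ 2 ≤ variance f μ * variance g μ := by
  set F : α → ℝ := fun x => f x - ∫ y, f y ∂μ with hF
  set G : α → ℝ := fun x => g x - ∫ y, g y ∂μ with hG
  have hF2 : MemLp F 2 μ := hf.sub (memLp_const _)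
  have hG2 : MemLp G 2 μ := hg.sub (memLp_const _)
  have hFF : Integrable (fun x => F x * F x) μ := integrable_mul_of_memL2 hF2 hF2
  have hFG : Integrable (fun x => F x * G x) μ := integrable_mul_of_memL2 hF2 hG2
  have hGG : Integrable (fun x => G x * G x) μ := integrable_mul_of_memL2 hG2 hG2
  have key : ∀ t : ℝ, 0 ≤ (∫ x, G x * G x ∂μ) * (t * t) + (2 * ∫ x, F x * G x ∂μ) * t
      + ∫ x, F x * F x ∂μ := by
    intro t
    have h1 : 0 ≤ ∫ x, (F x + t * G x) * (F x + t * G x) ∂μ :=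
      integral_nonneg fun x => mul_self_nonneg _
    have h2 : ∫ x, (F x + t * G x) * (F x + t * G x) ∂μ
        = (∫ x, G x * G x ∂μ) * (t * t) + (2 * ∫ x, F x * G x ∂μ) * t
          + ∫ x, F x * F x ∂μ := by
      have : (fun x => (F x + t * G x) * (F x + t * G x))
          = fun x => ((t * t) * (G x * G x) + (2 * t) * (F x * G x)) + F x * F x := by
        funext x; ring
      have hA : Integrable (fun x => t * t * (G x * G x) + 2 * t * (F x * G x)) μ :=
        (hGG.const_mul _).add (hFG.const_mul _)
      rw [this, integral_add hA hFF, integral_add (hGG.const_mul _) (hFG.const_mul _),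
        integral_const_mul, integral_const_mul]
      ring
    linarith [h2 ▸ h1]
  have hd := discrim_le_zero key
  rw [discrim] at hd
  have hcv : SR.cov μ f g = ∫ x, F x * G x ∂μ := rfl
  have hvf : variance f μ = ∫ x, F x * F x ∂μ := variance_eq_integral_center hf
  have hvg : variance g μ = ∫ x, G x * G x ∂μ := variance_eq_integral_center hg
  rw [hcv, hvf, hvg]
  nlinarith [hd]


end Aux

lemma memℒp_two_condexp' {α : Type*} {mα : MeasurableSpace α} {μ : Measure α} [IsFiniteMeasure μ]
    {m : MeasurableSpace α} (hm : m ≤ mα)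
    {f : α → ℝ} (hf : MemLp f 2 μ) : MemLp (μ[f|m]) 2 μ := by
  haveI : SigmaFinite (μ.trim hm) := inferInstance
  set fL : Lp ℝ 2 μ := hf.toLp f with hfL
  set gLm := condExpL2 ℝ ℝ hm fL with hgLm
  set gL : Lp ℝ 2 μ := (gLm : Lp ℝ 2 μ) with hgL
  have h2 : Integrable (gL : α → ℝ) μ := (Lp.memLp gL).integrable one_le_two
  have hae : (gL : α → ℝ) =ᵐ[μ] μ[f|m] := by
    refine ae_eq_condExp_of_forall_setIntegral_eq hm (hf.integrable one_le_two)
      (fun s _ _ => h2.restrict)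
      (fun s hs hμs => ?_) (lpMeas.aestronglyMeasurable gLm)
    have h1 : ∫ x in s, (gL : α → ℝ) x ∂μ = ∫ x in s, (fL : α → ℝ) x ∂μ :=
      integral_condExpL2_eq_of_fin_meas_real fL hs hμs.ne
    rw [h1]
    exact integral_congr_ae (ae_restrict_of_ae hf.coeFn_toLp)
  exact (Lp.memLp gL).ae_eq hae


lemma cov_condexp' {α : Type*} {mα : MeasurableSpace α} {μ : Measure α} [IsProbabilityMeasure μ]
    {m : MeasurableSpace α} (hm : m ≤ mα)
    {f g : α → ℝ} (hf : MemLp f 2 μ) (hg : MemLp g 2 μ) (hgm : StronglyMeasurable[m] g) :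
    @SR.cov α mα μ f g = @SR.cov α mα μ (μ[f|m]) g := by
  haveI : SigmaFinite (μ.trim hm) := inferInstance
  have hf1 : Integrable f μ := hf.integrable one_le_two
  have hf' : MemLp (μ[f|m]) 2 μ := memℒp_two_condexp' hm hf
  have hmean : ∫ x, (μ[f|m]) x ∂μ = ∫ x, f x ∂μ := integral_condExp hm
  set c : ℝ := ∫ y, f y ∂μ with hc
  set G : α → ℝ := fun x => g x - ∫ y, g y ∂μ with hG
  have hG2 : MemLp G 2 μ := hg.sub (memLp_const _)
  have hGm : StronglyMeasurable[m] G := hgm.sub stronglyMeasurable_const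
  have h1 : Integrable (fun x => (f x - c) * G x) μ :=
    integrable_mul_of_memL2 (hf.sub (memLp_const _)) hG2
  have h2 : Integrable (fun x => ((μ[f|m]) x - c) * G x) μ := by
    have := integrable_mul_of_memL2 (hf'.sub (memLp_const c)) hG2
    exact this
  have hdiff : Integrable (fun x => G x * (f x - (μ[f|m]) x)) μ :=
    integrable_mul_of_memL2 hG2 (hf.sub hf')
  have hfmf' : Integrable (fun x => f x - (μ[f|m]) x) μ := hf1.sub integrable_condExp
  have hzero : μ[(fun x => f x - (μ[f|m]) x)|m] =ᵐ[μ] 0 := by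
    have hsub := condExp_sub (m := m) (g := μ[f|m]) hf1 integrable_condExp
    have hcc : μ[(μ[f|m])|m] = μ[f|m] :=
      condExp_of_stronglyMeasurable hm stronglyMeasurable_condExp integrable_condExp
    filter_upwards [hsub] with x hx
    simp only [Pi.zero_apply]
    rw [show (fun x => f x - (μ[f|m]) x) = f - μ[f|m] from rfl] at *
    rw [hx, Pi.sub_apply, hcc]
    ring
  have hkey : ∫ x, G x * (f x - (μ[f|m]) x) ∂μ = 0 := by
    have hpull : μ[(fun x => G x * (f x - (μ[f|m]) x))|m]
        =ᵐ[μ] fun x => G x * (μ[(fun x => f x - (μ[f|m]) x)|m]) x := by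
      have := condExp_mul_of_stronglyMeasurable_left hGm
        (by exact hdiff) (by exact hfmf')
      exact this
    have hint := integral_condExp (μ := μ) (f := fun x => G x * (f x - (μ[f|m]) x)) hm
    rw [← hint]
    have : μ[(fun x => G x * (f x - (μ[f|m]) x))|m] =ᵐ[μ] 0 := by
      filter_upwards [hpull, hzero] with x hx1 hx2
      rw [hx1]
      simp only [Pi.zero_apply] at hx2 ⊢
      rw [hx2, mul_zero]
    rw [integral_congr_ae this]
    simp
  have expand : ∫ x, (f x - c) * G x ∂μ = ∫ x, ((μ[f|m]) x - c) * G x ∂μ := by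
    have hsplit : (fun x => (f x - c) * G x)
        = fun x => ((μ[f|m]) x - c) * G x + G x * (f x - (μ[f|m]) x) := by
      funext x; ring
    rw [hsplit, integral_add h2 hdiff, hkey, add_zero]
  show ∫ x, (f x - c) * G x ∂μ = ∫ x, ((μ[f|m]) x - ∫ y, (μ[f|m]) y ∂μ) * G x ∂μ
  rw [hmean]
  exact expand



section Coord

variable {V : Type*} {Ω : Type*} [MeasurableSpace Ω]

lemma coordSigma_le (U : Finset V) :
    coordSigma V Ω U ≤ MeasurableSpace.pi := by
  rw [coordSigma, ← measurable_iff_comap_le]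
  exact measurable_pi_lambda _ fun u => measurable_pi_apply _

lemma coordSigma_mono {S W : Finset V} (h : S ⊆ W) :
    coordSigma V Ω S ≤ coordSigma V Ω W := by
  let π : ({x // x ∈ W} → Ω) → ({x // x ∈ S} → Ω) := fun g s => g ⟨s.1, h s.2⟩
  have hπ : Measurable π := measurable_pi_lambda _ fun s => measurable_pi_apply _
  have hcomp : (fun (ω : V → Ω) (u : {x // x ∈ S}) => ω u)
      = π ∘ (fun (ω : V → Ω) (u : {x // x ∈ W}) => ω u) := rfl
  rw [coordSigma, coordSigma, hcomp, ← MeasurableSpace.comap_comp]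
  exact MeasurableSpace.comap_mono (measurable_iff_comap_le.mp hπ)

end Coord

section Marg

variable {V : Type*} [Fintype V] [DecidableEq V] {ν : Finset V → ℝ}

lemma marg1 (hν1 : ∑ S : Finset V, ν S = 1) {k : ℕ} (i : Fin k) (a : Finset V → ℝ) :
    ∑ t : Fin k → Finset V, (∏ l, ν (t l)) * a (t i) = ∑ S : Finset V, ν S * a S := by
  classical
  have h := Finset.prod_univ_sum (fun _ : Fin k => (Finset.univ : Finset (Finset V)))
      (fun l S => ν S * (if l = i then a S else 1))
  rw [Fintype.piFinset_univ] at h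
  have lhs : ∀ t : Fin k → Finset V,
      (∏ l, (ν (t l) * if l = i then a (t l) else 1)) = (∏ l, ν (t l)) * a (t i) := by
    intro t
    rw [Finset.prod_mul_distrib, Finset.prod_ite_eq' Finset.univ i (fun l => a (t l))]
    simp
  have rhs : ∀ l : Fin k, (∑ S : Finset V, ν S * (if l = i then a S else 1))
      = if l = i then ∑ S : Finset V, ν S * a S else 1 := by
    intro l
    split_ifs with hl <;> simp [hν1]
  calc ∑ t : Fin k → Finset V, (∏ l, ν (t l)) * a (t i)
      = ∑ t : Fin k → Finset V, ∏ l, (ν (t l) * if l = i then a (t l) else 1) := by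
        exact Finset.sum_congr rfl fun t _ => (lhs t).symm
    _ = ∏ l : Fin k, ∑ S : Finset V, ν S * (if l = i then a S else 1) := h.symm
    _ = ∏ l : Fin k, (if l = i then ∑ S : Finset V, ν S * a S else 1) :=
        Finset.prod_congr rfl fun l _ => rhs l
    _ = ∑ S : Finset V, ν S * a S := by
        rw [Finset.prod_ite_eq' Finset.univ i (fun _ => ∑ S : Finset V, ν S * a S)]
        simp

lemma marg2 (hν1 : ∑ S : Finset V, ν S = 1) {k : ℕ} {i j : Fin k} (hij : i ≠ j)
    (a b : Finset V → ℝ) :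
    ∑ t : Fin k → Finset V, (∏ l, ν (t l)) * (a (t i) * b (t j))
      = (∑ S : Finset V, ν S * a S) * (∑ S : Finset V, ν S * b S) := by
  classical
  have h := Finset.prod_univ_sum (fun _ : Fin k => (Finset.univ : Finset (Finset V)))
      (fun l S => ν S * ((if l = i then a S else 1) * (if l = j then b S else 1)))
  rw [Fintype.piFinset_univ] at h
  have lhs : ∀ t : Fin k → Finset V,
      (∏ l, (ν (t l) * ((if l = i then a (t l) else 1) * (if l = j then b (t l) else 1))))
        = (∏ l, ν (t l)) * (a (t i) * b (t j)) := by
    intro t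
    rw [Finset.prod_mul_distrib, Finset.prod_mul_distrib,
      Finset.prod_ite_eq' Finset.univ i (fun l => a (t l)),
      Finset.prod_ite_eq' Finset.univ j (fun l => b (t l))]
    simp
  have rhs : ∀ l : Fin k,
      (∑ S : Finset V, ν S * ((if l = i then a S else 1) * (if l = j then b S else 1)))
      = (if l = i then ∑ S : Finset V, ν S * a S else 1)
        * (if l = j then ∑ S : Finset V, ν S * b S else 1) := by
    intro l
    rcases eq_or_ne l i with hli | hli
    · subst hli
      simp [hij, mul_comm]
    · rcases eq_or_ne l j with hlj | hlj
      · subst hlj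
        simp [hli]
      · simp [hli, hlj, hν1]
  calc ∑ t : Fin k → Finset V, (∏ l, ν (t l)) * (a (t i) * b (t j))
      = ∑ t : Fin k → Finset V,
          ∏ l, (ν (t l) * ((if l = i then a (t l) else 1) * (if l = j then b (t l) else 1))) :=
        Finset.sum_congr rfl fun t _ => (lhs t).symm
    _ = ∏ l : Fin k, ∑ S : Finset V,
          ν S * ((if l = i then a S else 1) * (if l = j then b S else 1)) := h.symm
    _ = ∏ l : Fin k, ((if l = i then ∑ S : Finset V, ν S * a S else 1)
          * (if l = j then ∑ S : Finset V, ν S * b S else 1)) :=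
        Finset.prod_congr rfl fun l _ => rhs l
    _ = (∑ S : Finset V, ν S * a S) * (∑ S : Finset V, ν S * b S) := by
        rw [Finset.prod_mul_distrib,
          Finset.prod_ite_eq' Finset.univ i (fun _ => ∑ S : Finset V, ν S * a S),
          Finset.prod_ite_eq' Finset.univ j (fun _ => ∑ S : Finset V, ν S * b S)]
        simp

lemma sum_unionPow_mul {k : ℕ} (f : Finset V → ℝ) :
    ∑ W : Finset V, unionPow ν k W * f W
      = ∑ t : Fin k → Finset V, (∏ l, ν (t l)) * f (Finset.univ.sup t) := by
  classical
  rw [← Finset.sum_fiberwise Finset.univ (fun t : Fin k → Finset V => Finset.univ.sup t)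
    (fun t => (∏ l, ν (t l)) * f (Finset.univ.sup t))]
  refine Finset.sum_congr rfl fun W _ => ?_
  rw [unionPow, Finset.sum_mul]
  refine Finset.sum_congr rfl fun t ht => ?_
  rw [(Finset.mem_filter.mp ht).2]

end Marg


lemma memL2_sum {α : Type*} {mα : MeasurableSpace α} {μ : Measure α}
    {ι : Type*} (s : Finset ι) (f : ι → α → ℝ) (hf : ∀ i ∈ s, MemLp (f i) 2 μ) :
    MemLp (fun x => ∑ i ∈ s, f i x) 2 μ := by
  have h := memLp_finset_sum' s hf
  exact h.ae_eq (Eventually.of_forall fun x => by simp)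

/-- **High average correlation implies high expected clue for the generalized magnetization**
(Lemma 3.3 of the paper). If `Y S` is `F_S`-measurable with unit variance for all `S ⊆ V`,
`M = Σ_S ν(S)·Y_S` and `ρ = Σ_{S,T} ν(S)·ν(T)·Cov(Y_S, Y_T)`, then revealing the union of `k`
independent samples from `ν` gives expected clue at least `1 − 1/(1 + k·ρ)` about `M`. -/
theorem eClue_unionPow_ge_of_mean_corr
    {V : Type*} [Fintype V] [DecidableEq V]
    {Ω : Type*} [MeasurableSpace Ω]
    (μ : Measure (V → Ω)) [IsProbabilityMeasure μ]
    (ν : Finset V → ℝ) (hν : IsDist ν)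
    (Y : Finset V → (V → Ω) → ℝ)
    (hYmeas : ∀ S : Finset V, Measurable[coordSigma V Ω S] (Y S))
    (hYL2 : ∀ S : Finset V, MemLp (Y S) 2 μ)
    (hYvar : ∀ S : Finset V, variance (Y S) μ = 1)
    (k : ℕ) (hk : 1 ≤ k) :
    1 - 1 / (1 + (k : ℝ) *
        ∑ S : Finset V, ∑ T : Finset V, ν S * ν T * cov μ (Y S) (Y T))
      ≤ ∑ W : Finset V, unionPow ν k W *
          clue μ (fun ω => ∑ S : Finset V, ν S * Y S ω) W := by
  classical
  obtain ⟨hν0, hν1⟩ := hν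
  set M : (V → Ω) → ℝ := fun ω => ∑ S : Finset V, ν S * Y S ω with hMdef
  have hM2 : MemLp M 2 μ :=
    memL2_sum Finset.univ (fun S x => ν S * Y S x) (fun S _ => (hYL2 S).const_mul (ν S))
  set IY : Finset V → ℝ := fun S => ∫ y, Y S y ∂μ with hIY
  set Yc : Finset V → (V → Ω) → ℝ := fun S x => Y S x - IY S with hYc
  have hYc2 : ∀ S, MemLp (Yc S) 2 μ := fun S => (hYL2 S).sub (memLp_const _)
  have hYcYc : ∀ S T, Integrable (fun x => Yc S x * Yc T x) μ :=
    fun S T => integrable_mul_of_memL2 (hYc2 S) (hYc2 T)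
  have hY1 : ∀ S, Integrable (Y S) μ := fun S => (hYL2 S).integrable one_le_two
  -- mean of M
  have hMint : ∫ y, M y ∂μ = ∑ S : Finset V, ν S * IY S := by
    rw [hMdef]
    rw [integral_finset_sum Finset.univ (fun S _ => (hY1 S).const_mul (ν S))]
    exact Finset.sum_congr rfl fun S _ => integral_const_mul _ _
  -- centered M
  have hMc : ∀ x, M x - ∫ y, M y ∂μ = ∑ S : Finset V, ν S * Yc S x := by
    intro x
    rw [hMint, hMdef]
    rw [← Finset.sum_sub_distrib]
    exact Finset.sum_congr rfl fun S _ => by rw [hYc]; ring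
  have hMc2 : MemLp (fun x => M x - ∫ y, M y ∂μ) 2 μ := hM2.sub (memLp_const _)
  have hMcYc : ∀ S, Integrable (fun x => (M x - ∫ y, M y ∂μ) * Yc S x) μ :=
    fun S => integrable_mul_of_memL2 hMc2 (hYc2 S)
  -- variance of M as integral of Mc²
  have hvarM : variance M μ = ∫ x, (M x - ∫ y, M y ∂μ) * (M x - ∫ y, M y ∂μ) ∂μ :=
    variance_eq_integral_center hM2
  have hρpos : 0 ≤ variance M μ := variance_nonneg _ _
  -- the double sum equals the variance of M
  have hρsum : ∑ S : Finset V, ∑ T : Finset V, ν S * ν T * cov μ (Y S) (Y T)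
      = variance M μ := by
    have hcovq : ∀ S T : Finset V, cov μ (Y S) (Y T) = ∫ x, Yc S x * Yc T x ∂μ :=
      fun S T => rfl
    have hswap : ∀ S : Finset V,
        ∑ T : Finset V, ν S * ν T * ∫ x, Yc S x * Yc T x ∂μ
          = ∫ x, (ν S * Yc S x) * ∑ T : Finset V, ν T * Yc T x ∂μ := by
      intro S
      have hin : ∀ x : V → Ω, (ν S * Yc S x) * ∑ T : Finset V, ν T * Yc T x
          = ∑ T : Finset V, ν S * ν T * (Yc S x * Yc T x) := by
        intro x
        rw [Finset.mul_sum]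
        exact Finset.sum_congr rfl fun T _ => by ring
      have : (fun x => (ν S * Yc S x) * ∑ T : Finset V, ν T * Yc T x)
          = fun x => ∑ T : Finset V, ν S * ν T * (Yc S x * Yc T x) := funext hin
      rw [this, integral_finset_sum Finset.univ
        (fun T _ => ((hYcYc S T).const_mul (ν S * ν T)))]
      exact Finset.sum_congr rfl fun T _ => by
        rw [integral_const_mul]
    calc ∑ S : Finset V, ∑ T : Finset V, ν S * ν T * cov μ (Y S) (Y T)
        = ∑ S : Finset V, ∫ x, (ν S * Yc S x) * ∑ T : Finset V, ν T * Yc T x ∂μ := by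
          refine Finset.sum_congr rfl fun S _ => ?_
          rw [← hswap S]
          exact Finset.sum_congr rfl fun T _ => by rw [hcovq]
      _ = ∫ x, (∑ S : Finset V, ν S * Yc S x) * (∑ T : Finset V, ν T * Yc T x) ∂μ := by
          rw [← integral_finset_sum]
          · congr 1
            funext x
            rw [← Finset.sum_mul]
          · intro S _
            have : Integrable (fun x => Yc S x * ∑ T : Finset V, ν T * Yc T x) μ :=
              integrable_mul_of_memL2 (hYc2 S)
                (memL2_sum Finset.univ (fun T x => ν T * Yc T x)
                  (fun T _ => (hYc2 T).const_mul (ν T)))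
            have h2 := this.const_mul (ν S)
            refine h2.congr (Eventually.of_forall fun x => ?_)
            ring
      _ = variance M μ := by
          rw [hvarM]
          congr 1
          funext x
          rw [hMc x]
  -- per tuple objects
  set ρ : ℝ := variance M μ with hρdef
  have hZ2 : ∀ t : Fin k → Finset V, MemLp (fun x => ∑ i, Y (t i) x) 2 μ :=
    fun t => memL2_sum Finset.univ (fun i x => Y (t i) x) (fun i _ => hYL2 (t i))
  have hZmeas : ∀ t : Fin k → Finset V,
      StronglyMeasurable[coordSigma V Ω (Finset.univ.sup t)] (fun x => ∑ i, Y (t i) x) := by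
    intro t
    have : Measurable[coordSigma V Ω (Finset.univ.sup t)] (fun x => ∑ i, Y (t i) x) :=
      Finset.measurable_sum Finset.univ (fun i _ =>
        (hYmeas (t i)).mono (coordSigma_mono (Finset.le_sup (Finset.mem_univ i))) le_rfl)
    exact this.stronglyMeasurable
  -- mean and centered Z
  have hZint : ∀ t : Fin k → Finset V,
      ∫ y, (∑ i, Y (t i) y) ∂μ = ∑ i, IY (t i) :=
    fun t => integral_finset_sum Finset.univ (fun i _ => hY1 (t i))
  have hZc : ∀ (t : Fin k → Finset V) (x : V → Ω),
      (∑ i, Y (t i) x) - ∫ y, (∑ i, Y (t i) y) ∂μ = ∑ i, Yc (t i) x := by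
    intro t x
    rw [hZint t, ← Finset.sum_sub_distrib]
  -- covariance of M and Z as sum
  have hcovMZ : ∀ t : Fin k → Finset V,
      cov μ M (fun x => ∑ i, Y (t i) x)
        = ∑ i, ∫ x, (M x - ∫ y, M y ∂μ) * Yc (t i) x ∂μ := by
    intro t
    have h0 : cov μ M (fun x => ∑ i, Y (t i) x)
        = ∫ x, (M x - ∫ y, M y ∂μ) * ((∑ i, Y (t i) x) - ∫ y, (∑ i, Y (t i) y) ∂μ) ∂μ := rfl
    rw [h0]
    have : (fun x => (M x - ∫ y, M y ∂μ) * ((∑ i, Y (t i) x) - ∫ y, (∑ i, Y (t i) y) ∂μ))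
        = fun x => ∑ i, (M x - ∫ y, M y ∂μ) * Yc (t i) x := by
      funext x
      rw [hZc t x, Finset.mul_sum]
    rw [this]
    exact integral_finset_sum Finset.univ (fun i _ => hMcYc (t i))
  -- variance of Z as double sum
  have hvarZ : ∀ t : Fin k → Finset V,
      variance (fun x => ∑ i, Y (t i) x) μ
        = ∑ i, ∑ j, ∫ x, Yc (t i) x * Yc (t j) x ∂μ := by
    intro t
    rw [variance_eq_integral_center (hZ2 t)]
    have : (fun x => ((∑ i, Y (t i) x) - ∫ y, (∑ i, Y (t i) y) ∂μ)
          * ((∑ i, Y (t i) x) - ∫ y, (∑ i, Y (t i) y) ∂μ))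
        = fun x => ∑ i, ∑ j, Yc (t i) x * Yc (t j) x := by
      funext x
      rw [hZc t x, Finset.sum_mul_sum]
    rw [this]
    rw [integral_finset_sum Finset.univ (fun i _ => integrable_finset_sum Finset.univ
      (fun j _ => hYcYc (t i) (t j)))]
    exact Finset.sum_congr rfl fun i _ =>
      integral_finset_sum Finset.univ (fun j _ => hYcYc (t i) (t j))
  -- the key per-tuple inequality
  have hclue_nonneg : ∀ W : Finset V, 0 ≤ clue μ M W := by
    intro W
    rw [clue]
    split
    · exact le_refl 0
    · exact div_nonneg (variance_nonneg _ _) (variance_nonneg _ _)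
  have hvarZ_nonneg : ∀ t : Fin k → Finset V,
      0 ≤ variance (fun x => ∑ i, Y (t i) x) μ := fun t => variance_nonneg _ _
  have hkey : ∀ t : Fin k → Finset V,
      cov μ M (fun x => ∑ i, Y (t i) x) ^ 2
        ≤ clue μ M (Finset.univ.sup t) * ρ * variance (fun x => ∑ i, Y (t i) x) μ := by
    intro t
    by_cases hv : variance M μ = 0
    · have h1 := cov_sq_le_var_mul_var hM2 (hZ2 t)
      rw [hv, zero_mul] at h1
      have h2 : clue μ M (Finset.univ.sup t) = 0 := by rw [clue, if_pos hv]
      rw [h2, zero_mul, zero_mul]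
      exact h1
    · have hle := coordSigma_le (Ω := Ω) (Finset.univ.sup t)
      have hcc := cov_condexp' hle hM2 (hZ2 t) (hZmeas t)
      have hM'2 := memℒp_two_condexp' hle hM2
      have hCS := cov_sq_le_var_mul_var hM'2 (hZ2 t)
      have hvar' : variance (μ[M|coordSigma V Ω (Finset.univ.sup t)]) μ
          = clue μ M (Finset.univ.sup t) * ρ := by
        rw [clue, if_neg hv, hρdef]
        exact (div_mul_cancel₀ _ hv).symm
      rw [hcc]
      calc cov μ (μ[M|coordSigma V Ω (Finset.univ.sup t)]) (fun x => ∑ i, Y (t i) x) ^ 2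
          ≤ variance (μ[M|coordSigma V Ω (Finset.univ.sup t)]) μ
            * variance (fun x => ∑ i, Y (t i) x) μ := hCS
        _ = clue μ M (Finset.univ.sup t) * ρ * variance (fun x => ∑ i, Y (t i) x) μ := by
            rw [hvar']
  -- sum identities
  have hgM : ∑ S : Finset V, ν S * ∫ x, (M x - ∫ y, M y ∂μ) * Yc S x ∂μ = ρ := by
    have : ∑ S : Finset V, ν S * ∫ x, (M x - ∫ y, M y ∂μ) * Yc S x ∂μ
        = ∫ x, (M x - ∫ y, M y ∂μ) * ∑ S : Finset V, ν S * Yc S x ∂μ := by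
      rw [show (fun x => (M x - ∫ y, M y ∂μ) * ∑ S : Finset V, ν S * Yc S x)
          = fun x => ∑ S : Finset V, ν S * ((M x - ∫ y, M y ∂μ) * Yc S x) from
        funext fun x => by rw [Finset.mul_sum]; exact Finset.sum_congr rfl fun S _ => by ring]
      rw [integral_finset_sum Finset.univ (fun S _ => (hMcYc S).const_mul (ν S))]
      exact Finset.sum_congr rfl fun S _ => by rw [integral_const_mul]
    rw [this, hvarM]
    congr 1
    funext x
    rw [hMc x]
  -- total weighted covariance
  have hA : ∑ t : Fin k → Finset V, (∏ l, ν (t l)) * cov μ M (fun x => ∑ i, Y (t i) x)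
      = (k : ℝ) * ρ := by
    calc ∑ t : Fin k → Finset V, (∏ l, ν (t l)) * cov μ M (fun x => ∑ i, Y (t i) x)
        = ∑ t : Fin k → Finset V, ∑ i : Fin k,
            (∏ l, ν (t l)) * ∫ x, (M x - ∫ y, M y ∂μ) * Yc (t i) x ∂μ := by
          refine Finset.sum_congr rfl fun t _ => ?_
          rw [hcovMZ t, Finset.mul_sum]
      _ = ∑ i : Fin k, ∑ t : Fin k → Finset V,
            (∏ l, ν (t l)) * ∫ x, (M x - ∫ y, M y ∂μ) * Yc (t i) x ∂μ :=
          Finset.sum_comm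
      _ = ∑ i : Fin k, ∑ S : Finset V, ν S * ∫ x, (M x - ∫ y, M y ∂μ) * Yc S x ∂μ :=
          Finset.sum_congr rfl fun i _ =>
            marg1 hν1 i (fun S => ∫ x, (M x - ∫ y, M y ∂μ) * Yc S x ∂μ)
      _ = ∑ _i : Fin k, ρ := Finset.sum_congr rfl fun i _ => hgM
      _ = (k : ℝ) * ρ := by
          rw [Finset.sum_const, Finset.card_univ, Fintype.card_fin, nsmul_eq_mul]
  -- total weighted variance of Z
  have hqSS : ∀ S : Finset V, ∫ x, Yc S x * Yc S x ∂μ = 1 := by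
    intro S
    rw [← variance_eq_integral_center (hYL2 S)]
    exact hYvar S
  have hB : ∑ t : Fin k → Finset V, (∏ l, ν (t l)) * variance (fun x => ∑ i, Y (t i) x) μ
      = (k : ℝ) + ((k : ℝ) ^ 2 - (k : ℝ)) * ρ := by
    have hoff : ∀ i j : Fin k, i ≠ j →
        ∑ t : Fin k → Finset V, (∏ l, ν (t l)) * ∫ x, Yc (t i) x * Yc (t j) x ∂μ = ρ := by
      intro i j hij
      have hint : ∀ t : Fin k → Finset V,
          (∏ l, ν (t l)) * ∫ x, Yc (t i) x * Yc (t j) x ∂μ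
            = ∫ x, (∏ l, ν (t l)) * (Yc (t i) x * Yc (t j) x) ∂μ := by
        intro t
        rw [integral_const_mul]
      calc ∑ t : Fin k → Finset V, (∏ l, ν (t l)) * ∫ x, Yc (t i) x * Yc (t j) x ∂μ
          = ∫ x, ∑ t : Fin k → Finset V, (∏ l, ν (t l)) * (Yc (t i) x * Yc (t j) x) ∂μ := by
            rw [integral_finset_sum Finset.univ
              (fun t _ => (hYcYc (t i) (t j)).const_mul _)]
            exact Finset.sum_congr rfl fun t _ => hint t
        _ = ∫ x, (∑ S : Finset V, ν S * Yc S x) * (∑ S : Finset V, ν S * Yc S x) ∂μ := by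
            congr 1
            funext x
            exact marg2 hν1 hij (fun S => Yc S x) (fun S => Yc S x)
        _ = ρ := by
            rw [hvarM]
            congr 1
            funext x
            rw [hMc x]
    have hdiag : ∀ i : Fin k,
        ∑ t : Fin k → Finset V, (∏ l, ν (t l)) * ∫ x, Yc (t i) x * Yc (t i) x ∂μ = 1 := by
      intro i
      have h := marg1 hν1 i (fun S => ∫ x, Yc S x * Yc S x ∂μ)
      rw [h]
      calc ∑ S : Finset V, ν S * ∫ x, Yc S x * Yc S x ∂μ
          = ∑ S : Finset V, ν S := Finset.sum_congr rfl fun S _ => by rw [hqSS S, mul_one]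
        _ = 1 := hν1
    calc ∑ t : Fin k → Finset V, (∏ l, ν (t l)) * variance (fun x => ∑ i, Y (t i) x) μ
        = ∑ t : Fin k → Finset V, ∑ i : Fin k, ∑ j : Fin k,
            (∏ l, ν (t l)) * ∫ x, Yc (t i) x * Yc (t j) x ∂μ := by
          refine Finset.sum_congr rfl fun t _ => ?_
          rw [hvarZ t, Finset.mul_sum]
          exact Finset.sum_congr rfl fun i _ => by rw [Finset.mul_sum]
      _ = ∑ i : Fin k, ∑ j : Fin k, ∑ t : Fin k → Finset V,
            (∏ l, ν (t l)) * ∫ x, Yc (t i) x * Yc (t j) x ∂μ := by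
          rw [Finset.sum_comm]
          exact Finset.sum_congr rfl fun i _ => Finset.sum_comm
      _ = ∑ i : Fin k, ∑ j : Fin k, (if i = j then (1 : ℝ) else ρ) := by
          refine Finset.sum_congr rfl fun i _ => Finset.sum_congr rfl fun j _ => ?_
          by_cases hij : i = j
          · subst hij
            rw [if_pos rfl]
            exact hdiag i
          · rw [if_neg hij]
            exact hoff i j hij
      _ = (k : ℝ) + ((k : ℝ) ^ 2 - (k : ℝ)) * ρ := by
          have : ∀ i : Fin k, ∑ j : Fin k, (if i = j then (1 : ℝ) else ρ)
              = (k : ℝ) * ρ + (1 - ρ) := by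
            intro i
            have : ∀ j : Fin k, (if i = j then (1 : ℝ) else ρ)
                = ρ + (if i = j then (1 - ρ : ℝ) else 0) := by
              intro j
              by_cases hij : i = j <;> simp [hij]
            rw [Finset.sum_congr rfl fun j _ => this j, Finset.sum_add_distrib,
              Finset.sum_const, Finset.sum_ite_eq Finset.univ i (fun _ => (1 - ρ : ℝ))]
            simp [Finset.card_univ, mul_comm]
          rw [Finset.sum_congr rfl fun i _ => this i, Finset.sum_const, Finset.card_univ,
            Fintype.card_fin, nsmul_eq_mul]
          ring
  -- weights are nonnegative and the weighted clue sum
  have hw0 : ∀ t : Fin k → Finset V, 0 ≤ ∏ l, ν (t l) :=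
    fun t => Finset.prod_nonneg fun l _ => hν0 (t l)
  set E : ℝ := ∑ t : Fin k → Finset V, (∏ l, ν (t l)) * clue μ M (Finset.univ.sup t)
    with hEdef
  have hE0 : 0 ≤ E :=
    Finset.sum_nonneg fun t _ => mul_nonneg (hw0 t) (hclue_nonneg _)
  -- Cauchy-Schwarz
  have hCSsum : ((k : ℝ) * ρ) ^ 2
      ≤ (ρ * E) * ((k : ℝ) + ((k : ℝ) ^ 2 - (k : ℝ)) * ρ) := by
    have hterm : ∀ t : Fin k → Finset V,
        (∏ l, ν (t l)) * cov μ M (fun x => ∑ i, Y (t i) x)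
          ≤ Real.sqrt ((∏ l, ν (t l)) * (clue μ M (Finset.univ.sup t) * ρ))
            * Real.sqrt ((∏ l, ν (t l)) * variance (fun x => ∑ i, Y (t i) x) μ) := by
      intro t
      have h1 : 0 ≤ (∏ l, ν (t l)) * (clue μ M (Finset.univ.sup t) * ρ) :=
        mul_nonneg (hw0 t) (mul_nonneg (hclue_nonneg _) hρpos)
      have h2 : 0 ≤ (∏ l, ν (t l)) * variance (fun x => ∑ i, Y (t i) x) μ :=
        mul_nonneg (hw0 t) (hvarZ_nonneg t)
      rw [← Real.sqrt_mul h1]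
      have h3 : ((∏ l, ν (t l)) * cov μ M (fun x => ∑ i, Y (t i) x)) ^ 2
          ≤ (∏ l, ν (t l)) * (clue μ M (Finset.univ.sup t) * ρ)
            * ((∏ l, ν (t l)) * variance (fun x => ∑ i, Y (t i) x) μ) := by
        have h4 := mul_le_mul_of_nonneg_left (hkey t) (sq_nonneg (∏ l, ν (t l)))
        calc ((∏ l, ν (t l)) * cov μ M (fun x => ∑ i, Y (t i) x)) ^ 2
            = (∏ l, ν (t l)) ^ 2 * cov μ M (fun x => ∑ i, Y (t i) x) ^ 2 := by ring
          _ ≤ (∏ l, ν (t l)) ^ 2 * (clue μ M (Finset.univ.sup t) * ρ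
              * variance (fun x => ∑ i, Y (t i) x) μ) := h4
          _ = (∏ l, ν (t l)) * (clue μ M (Finset.univ.sup t) * ρ)
              * ((∏ l, ν (t l)) * variance (fun x => ∑ i, Y (t i) x) μ) := by ring
      calc (∏ l, ν (t l)) * cov μ M (fun x => ∑ i, Y (t i) x)
          ≤ |(∏ l, ν (t l)) * cov μ M (fun x => ∑ i, Y (t i) x)| := le_abs_self _
        _ = Real.sqrt (((∏ l, ν (t l)) * cov μ M (fun x => ∑ i, Y (t i) x)) ^ 2) :=
            (Real.sqrt_sq_eq_abs _).symm
        _ ≤ Real.sqrt ((∏ l, ν (t l)) * (clue μ M (Finset.univ.sup t) * ρ)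
              * ((∏ l, ν (t l)) * variance (fun x => ∑ i, Y (t i) x) μ)) :=
            Real.sqrt_le_sqrt h3
    have hsum_le : (k : ℝ) * ρ
        ≤ ∑ t : Fin k → Finset V,
            Real.sqrt ((∏ l, ν (t l)) * (clue μ M (Finset.univ.sup t) * ρ))
              * Real.sqrt ((∏ l, ν (t l)) * variance (fun x => ∑ i, Y (t i) x) μ) := by
      rw [← hA]
      exact Finset.sum_le_sum fun t _ => hterm t
    have hkρ0 : 0 ≤ (k : ℝ) * ρ := mul_nonneg (Nat.cast_nonneg k) hρpos
    have hCS2 := Finset.sum_mul_sq_le_sq_mul_sq Finset.univ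
      (fun t : Fin k → Finset V =>
        Real.sqrt ((∏ l, ν (t l)) * (clue μ M (Finset.univ.sup t) * ρ)))
      (fun t : Fin k → Finset V =>
        Real.sqrt ((∏ l, ν (t l)) * variance (fun x => ∑ i, Y (t i) x) μ))
    have hsq1 : ∑ t : Fin k → Finset V,
        Real.sqrt ((∏ l, ν (t l)) * (clue μ M (Finset.univ.sup t) * ρ)) ^ 2
          = ρ * E := by
      rw [hEdef, Finset.mul_sum]
      refine Finset.sum_congr rfl fun t _ => ?_
      rw [Real.sq_sqrt (mul_nonneg (hw0 t) (mul_nonneg (hclue_nonneg _) hρpos))]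
      ring
    have hsq2 : ∑ t : Fin k → Finset V,
        Real.sqrt ((∏ l, ν (t l)) * variance (fun x => ∑ i, Y (t i) x) μ) ^ 2
          = (k : ℝ) + ((k : ℝ) ^ 2 - (k : ℝ)) * ρ := by
      rw [← hB]
      refine Finset.sum_congr rfl fun t _ => ?_
      rw [Real.sq_sqrt (mul_nonneg (hw0 t) (hvarZ_nonneg t))]
    calc ((k : ℝ) * ρ) ^ 2
        ≤ (∑ t : Fin k → Finset V,
            Real.sqrt ((∏ l, ν (t l)) * (clue μ M (Finset.univ.sup t) * ρ))
              * Real.sqrt ((∏ l, ν (t l)) * variance (fun x => ∑ i, Y (t i) x) μ)) ^ 2 :=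
          pow_le_pow_left₀ hkρ0 hsum_le 2
      _ ≤ (∑ t : Fin k → Finset V,
            Real.sqrt ((∏ l, ν (t l)) * (clue μ M (Finset.univ.sup t) * ρ)) ^ 2)
          * (∑ t : Fin k → Finset V,
            Real.sqrt ((∏ l, ν (t l)) * variance (fun x => ∑ i, Y (t i) x) μ) ^ 2) := hCS2
      _ = (ρ * E) * ((k : ℝ) + ((k : ℝ) ^ 2 - (k : ℝ)) * ρ) := by rw [hsq1, hsq2]
  -- rewrite the goal
  rw [hρsum]
  rw [sum_unionPow_mul (ν := ν) (k := k) (clue μ M), ← hEdef]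
  -- final numeric inequality
  have hk1 : (1 : ℝ) ≤ (k : ℝ) := by exact_mod_cast hk
  have hden : (0 : ℝ) < 1 + (k : ℝ) * ρ := by positivity
  have hfinal : (k : ℝ) * ρ ≤ E * (1 + (k : ℝ) * ρ) := by
    rcases eq_or_lt_of_le hρpos with hρ0 | hρ0
    · rw [← hρ0]
      simpa using hE0
    · have hB_le : (k : ℝ) + ((k : ℝ) ^ 2 - (k : ℝ)) * ρ ≤ (k : ℝ) * (1 + (k : ℝ) * ρ) := by
        nlinarith
      have h1 : ((k : ℝ) * ρ) ^ 2 ≤ (ρ * E) * ((k : ℝ) * (1 + (k : ℝ) * ρ)) := by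
        calc ((k : ℝ) * ρ) ^ 2 ≤ (ρ * E) * ((k : ℝ) + ((k : ℝ) ^ 2 - (k : ℝ)) * ρ) := hCSsum
          _ ≤ (ρ * E) * ((k : ℝ) * (1 + (k : ℝ) * ρ)) := by
              apply mul_le_mul_of_nonneg_left hB_le (mul_nonneg hρpos hE0)
      have hkρpos : 0 < (k : ℝ) * ρ := mul_pos (by linarith) hρ0
      have h2 : ((k : ℝ) * ρ) * ((k : ℝ) * ρ) ≤ ((k : ℝ) * ρ) * (E * (1 + (k : ℝ) * ρ)) := by
        nlinarith [h1]
      exact le_of_mul_le_mul_left h2 hkρpos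
  calc 1 - 1 / (1 + (k : ℝ) * ρ) = (k : ℝ) * ρ / (1 + (k : ℝ) * ρ) := by
        field_simp
        ring
    _ ≤ E := by
        rw [div_le_iff₀ hden]
        exact hfinal
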